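/- Suppose in addition that for each t, E(t) = U(t)T(t)V(t)^H with U(t), V(t) ∈ ℂ^{n×2} having orthonormal columns, T(t) ∈ ℂ^{2×2} invertible, ‖E(t)‖_F = 1, and that E solves the projected differential equation Ė = −P_E(S) + Re⟨E,S⟩E, where S(t) = y(t) y(t)^H G(t)^H + G(t)^H x(t) x(t)^H and P_E(Z) = Z − (I − UU^H) Z (I − VV^H). Then d/dt |y(t)^H x(t)| = −ε |y(t)^H x(t)| · ‖P_E(S) − Re⟨E,S⟩E‖_F². -/

import Mathlib

open Matrix

/-- Frobenius inner product `⟨A,B⟩ = trace(Aᴴ B)`. -/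
noncomputable def frobInner {n : ℕ} (A B : Matrix (Fin n) (Fin n) ℂ) : ℂ :=
  (Aᴴ * B).trace

/-- Frobenius norm `‖A‖_F = √⟨A,A⟩`. -/
noncomputable def frobNorm {n : ℕ} (A : Matrix (Fin n) (Fin n) ℂ) : ℝ :=
  Real.sqrt (frobInner A A).re

/-- `G` is a group inverse of `M`. -/
def IsGroupInverse {n : ℕ} (M G : Matrix (Fin n) (Fin n) ℂ) : Prop :=
  M * G = G * M ∧ G * M * G = G ∧ M * G * M = M

/-- The matrix `S = y yᴴ Gᴴ + Gᴴ x xᴴ`. -/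
noncomputable def Smat {n : ℕ} (x y : Fin n → ℂ) (G : Matrix (Fin n) (Fin n) ℂ) :
    Matrix (Fin n) (Fin n) ℂ :=
  vecMulVec y (star y) * Gᴴ + Gᴴ * vecMulVec x (star x)

/-- Orthogonal projection onto the tangent space of the rank-2 manifold at `E = U T Vᴴ`:
`P_E(Z) = Z − (I − UUᴴ) Z (I − VVᴴ)`. -/
noncomputable def PE {n : ℕ} (U V : Matrix (Fin n) (Fin 2) ℂ) (Z : Matrix (Fin n) (Fin n) ℂ) :
    Matrix (Fin n) (Fin n) ℂ :=
  Z - (1 - U * Uᴴ) * Z * (1 - V * Vᴴ)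


section Aux
variable {n : ℕ}

lemma hasDerivAt_cabs (f : ℝ → ℂ) (c : ℂ) (t : ℝ) (hf : HasDerivAt f (c * f t) t)
    (h0 : f t ≠ 0) :
    HasDerivAt (fun s => ‖f s‖) (c.re * ‖f t‖) t := by
  have hre : HasDerivAt (fun s => (f s).re) (c * f t).re t := by
    simpa [Function.comp_def] using (Complex.reCLM.hasFDerivAt (x := f t)).comp_hasDerivAt t hf
  have him : HasDerivAt (fun s => (f s).im) (c * f t).im t := by
    simpa [Function.comp_def] using (Complex.imCLM.hasFDerivAt (x := f t)).comp_hasDerivAt t hf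
  have hns : HasDerivAt (fun s => Complex.normSq (f s))
      (2 * (c.re * Complex.normSq (f t))) t := by
    have := (hre.mul hre).add (him.mul him)
    have heq : (c * f t).re * (f t).re + (f t).re * (c * f t).re
        + ((c * f t).im * (f t).im + (f t).im * (c * f t).im)
        = 2 * (c.re * Complex.normSq (f t)) := by
      simp [Complex.mul_re, Complex.mul_im, Complex.normSq_apply]; ring
    simp only [Complex.normSq_apply]
    exact heq ▸ this
  have hne : Complex.normSq (f t) ≠ 0 := by
    simpa [Complex.normSq_eq_zero] using h0
  have := hns.sqrt hne
  have habs : ∀ z : ℂ, Real.sqrt (Complex.normSq z) = ‖z‖ := by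
    intro z; rw [Complex.norm_def]
  have hval : 2 * (c.re * Complex.normSq (f t)) / (2 * ‖f t‖)
      = c.re * ‖f t‖ := by
    have h1 : Complex.normSq (f t) = ‖f t‖ ^ 2 := (Complex.sq_norm _).symm
    have h2 : ‖f t‖ ≠ 0 := by simpa using h0
    field_simp [h1]; rw [h1]
  rw [habs (f t)] at this; rw [hval] at this; simpa [habs] using this

lemma frobInner_sub_right (A B C : Matrix (Fin n) (Fin n) ℂ) :
    frobInner A (B - C) = frobInner A B - frobInner A C := by
  simp [frobInner, mul_sub]

lemma frobInner_neg_right (A B : Matrix (Fin n) (Fin n) ℂ) :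
    frobInner A (-B) = -frobInner A B := by
  simp [frobInner]

lemma frobInner_smul_right (A B : Matrix (Fin n) (Fin n) ℂ) (z : ℂ) :
    frobInner A (z • B) = z * frobInner A B := by
  simp [frobInner, Matrix.mul_smul, Matrix.trace_smul, smul_eq_mul]

lemma frobInner_sub_left (A B C : Matrix (Fin n) (Fin n) ℂ) :
    frobInner (A - B) C = frobInner A C - frobInner B C := by
  simp [frobInner, sub_mul]

lemma frobInner_smul_left (A B : Matrix (Fin n) (Fin n) ℂ) (z : ℂ) :
    frobInner (z • A) B = starRingEnd ℂ z * frobInner A B := by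
  simp [frobInner, Matrix.conjTranspose_smul, Matrix.smul_mul, Matrix.trace_smul, smul_eq_mul]

lemma frobInner_self_re_nonneg (A : Matrix (Fin n) (Fin n) ℂ) : 0 ≤ (frobInner A A).re := by
  simp only [frobInner, Matrix.trace, Matrix.diag, Matrix.mul_apply,
    Matrix.conjTranspose_apply, Complex.re_sum]
  refine Finset.sum_nonneg fun j _ => Finset.sum_nonneg fun i _ => ?_
  simpa [Complex.mul_re, Complex.star_def, Complex.conj_re, Complex.conj_im] using
    (by nlinarith [sq_nonneg ((A i j).re), sq_nonneg ((A i j).im)] :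
      (0:ℝ) ≤ (A i j).re * (A i j).re + (A i j).im * (A i j).im)

lemma frobNorm_sq (A : Matrix (Fin n) (Fin n) ℂ) :
    frobNorm A ^ 2 = (frobInner A A).re :=
  Real.sq_sqrt (frobInner_self_re_nonneg A)

lemma frobInner_adj (P Q Z W : Matrix (Fin n) (Fin n) ℂ) (hP : Pᴴ = P) (hQ : Qᴴ = Q) :
    frobInner (P * Z * Q) W = frobInner Z (P * W * Q) := by
  simp only [frobInner, Matrix.conjTranspose_mul, hP, hQ]
  rw [mul_assoc, Matrix.trace_mul_comm]
  congr 1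
  noncomm_ring

lemma trace_vecMulVec_mul (a b : Fin n → ℂ) (M : Matrix (Fin n) (Fin n) ℂ) :
    (vecMulVec a b * M).trace = b ⬝ᵥ (M *ᵥ a) := by
  simp only [Matrix.trace, Matrix.diag, Matrix.mul_apply, vecMulVec_apply, dotProduct,
    Matrix.mulVec, Finset.mul_sum]
  rw [Finset.sum_comm]
  exact Finset.sum_congr rfl fun j _ => Finset.sum_congr rfl fun i _ => by ring

lemma vecMulVec_conjT (a : Fin n → ℂ) :
    (vecMulVec a (star a))ᴴ = vecMulVec a (star a) := by
  ext i j
  simp [Matrix.conjTranspose_apply, vecMulVec_apply, mul_comm]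

lemma frobInner_Smat (x y : Fin n → ℂ) (G Z : Matrix (Fin n) (Fin n) ℂ) :
    frobInner (Smat x y G) Z
      = star x ⬝ᵥ ((G * Z) *ᵥ x) + star y ⬝ᵥ ((Z * G) *ᵥ y) := by
  have h1 : (G * vecMulVec y (star y) * Z).trace = star y ⬝ᵥ ((Z * G) *ᵥ y) := by
    rw [Matrix.trace_mul_comm, ← mul_assoc, Matrix.trace_mul_comm, trace_vecMulVec_mul]
  have h2 : (vecMulVec x (star x) * G * Z).trace = star x ⬝ᵥ ((G * Z) *ᵥ x) := by
    rw [mul_assoc, trace_vecMulVec_mul]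
  simp only [frobInner, Smat, Matrix.conjTranspose_add, Matrix.conjTranspose_mul,
    Matrix.conjTranspose_conjTranspose, vecMulVec_conjT, Matrix.add_mul, Matrix.trace_add]
  rw [h1, h2, add_comm]

lemma key_orth (P Q S E : Matrix (Fin n) (Fin n) ℂ) (hP : Pᴴ = P) (hQ : Qᴴ = Q)
    (hPP : P * P = P) (hQQ : Q * Q = Q) (hPEQ : P * E * Q = 0)
    (hEE : (frobInner E E).re = 1) (α : ℝ) (hα : α = (frobInner E S).re) :
    (frobInner (S - P * S * Q - (α : ℂ) • E) (S - P * S * Q - (α : ℂ) • E)).re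
      = (frobInner S (S - P * S * Q - (α : ℂ) • E)).re := by
  set D := S - P * S * Q - (α : ℂ) • E with hD
  have hzero : frobInner S (0 : Matrix (Fin n) (Fin n) ℂ) = 0 := by simp [frobInner]
  have hPDQ : P * D * Q = 0 := by
    have e1 : P * (P * S * Q) * Q = P * S * Q := by
      rw [show P * (P * S * Q) * Q = P * P * S * (Q * Q) by noncomm_ring, hPP, hQQ]
    have e2 : P * ((α : ℂ) • E) * Q = (α : ℂ) • (P * E * Q) := by
      rw [Matrix.mul_smul, Matrix.smul_mul]
    rw [hD, Matrix.mul_sub, Matrix.sub_mul, Matrix.mul_sub, Matrix.sub_mul, e1, e2, hPEQ]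
    simp
  have hPSQ_D : frobInner (P * S * Q) D = 0 := by
    rw [frobInner_adj _ _ _ _ hP hQ, hPDQ, hzero]
  have hEPSQ : frobInner E (P * S * Q) = 0 := by
    rw [← frobInner_adj _ _ _ _ hP hQ, hPEQ]
    simp [frobInner]
  have hED : (frobInner E D).re = 0 := by
    rw [hD, frobInner_sub_right, frobInner_sub_right, hEPSQ, frobInner_smul_right]
    simp [Complex.mul_re, hEE, hα]
  have hmain : frobInner D D = frobInner S D - frobInner (P * S * Q) D
      - (α : ℂ) * frobInner E D := by
    conv_lhs => rw [hD]
    rw [frobInner_sub_left, frobInner_sub_left, frobInner_smul_left, Complex.conj_ofReal]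
  rw [hmain, hPSQ_D]
  simp [Complex.mul_re, hED]

end Aux

theorem stmt6 {n : ℕ} (hn : 2 ≤ n) (A : Matrix (Fin n) (Fin n) ℂ) (ε : ℝ) (hε : 0 < ε)
    (E E' : ℝ → Matrix (Fin n) (Fin n) ℂ)
    (U V : ℝ → Matrix (Fin n) (Fin 2) ℂ) (T : ℝ → Matrix (Fin 2) (Fin 2) ℂ)
    (x x' y y' : ℝ → (Fin n → ℂ))
    (lam lam' : ℝ → ℂ)
    (G G' : ℝ → Matrix (Fin n) (Fin n) ℂ)
    (hEdiff : ∀ t i j, HasDerivAt (fun s => E s i j) (E' t i j) t)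
    (hxdiff : ∀ t i, HasDerivAt (fun s => x s i) (x' t i) t)
    (hydiff : ∀ t i, HasDerivAt (fun s => y s i) (y' t i) t)
    (hlamdiff : ∀ t, HasDerivAt lam (lam' t) t)
    (hGdiff : ∀ t i j, HasDerivAt (fun s => G s i j) (G' t i j) t)
    (heig : ∀ t, (A + (ε : ℂ) • E t) *ᵥ x t = lam t • x t)
    (hleig : ∀ t, star (y t) ᵥ* (A + (ε : ℂ) • E t) = lam t • star (y t))
    (hxnorm : ∀ t, star (x t) ⬝ᵥ x t = 1)
    (hynorm : ∀ t, star (y t) ⬝ᵥ y t = 1)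
    (hyx : ∀ t, star (y t) ⬝ᵥ x t ≠ 0)
    (hG : ∀ t, IsGroupInverse (A + (ε : ℂ) • E t - lam t • 1) (G t))
    (hGx : ∀ t, G t *ᵥ x t = 0)
    (hyG : ∀ t, star (y t) ᵥ* G t = 0)
    (hx' : ∀ t, x' t =
      (star (x t) ⬝ᵥ (G t *ᵥ (((ε : ℂ) • E' t) *ᵥ x t))) • x t
        - G t *ᵥ (((ε : ℂ) • E' t) *ᵥ x t))
    (hy' : ∀ t, star (y' t) =
      (star (y t) ⬝ᵥ ((((ε : ℂ) • E' t) * G t) *ᵥ y t)) • star (y t)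
        - star (y t) ᵥ* (((ε : ℂ) • E' t) * G t))
    (hUorth : ∀ t, (U t)ᴴ * U t = 1)
    (hVorth : ∀ t, (V t)ᴴ * V t = 1)
    (hTinv : ∀ t, IsUnit (T t))
    (hEfac : ∀ t, E t = U t * T t * (V t)ᴴ)
    (hEnorm : ∀ t, frobNorm (E t) = 1)
    (hODE : ∀ t, E' t = -(PE (U t) (V t) (Smat (x t) (y t) (G t)))
        + (frobInner (E t) (Smat (x t) (y t) (G t))).re • E t) :
    ∀ t, HasDerivAt (fun s => ‖star (y s) ⬝ᵥ x s‖)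
      (-(ε * ‖star (y t) ⬝ᵥ x t‖) *
        frobNorm (PE (U t) (V t) (Smat (x t) (y t) (G t))
          - (frobInner (E t) (Smat (x t) (y t) (G t))).re • E t) ^ 2) t := by
  intro t
  set St := Smat (x t) (y t) (G t) with hStdef
  set α : ℝ := (frobInner (E t) St).re with hαdef
  set D := PE (U t) (V t) St - α • E t with hDdef
  set P : Matrix (Fin n) (Fin n) ℂ := 1 - U t * (U t)ᴴ with hPdef
  set Q : Matrix (Fin n) (Fin n) ℂ := 1 - V t * (V t)ᴴ with hQdef
  -- real smul as complex smul
  have hsmul : α • E t = (α : ℂ) • E t := by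
    ext i j; simp [Matrix.smul_apply, Complex.real_smul]
  -- Hermitian idempotents
  have hP : Pᴴ = P := by
    simp [hPdef, Matrix.conjTranspose_sub, Matrix.conjTranspose_mul,
      Matrix.conjTranspose_one, Matrix.conjTranspose_conjTranspose]
  have hQ : Qᴴ = Q := by
    simp [hQdef, Matrix.conjTranspose_sub, Matrix.conjTranspose_mul,
      Matrix.conjTranspose_one, Matrix.conjTranspose_conjTranspose]
  have hUU : U t * (U t)ᴴ * (U t * (U t)ᴴ) = U t * (U t)ᴴ := by
    rw [Matrix.mul_assoc, ← Matrix.mul_assoc ((U t)ᴴ), hUorth t, Matrix.one_mul]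
  have hVV : V t * (V t)ᴴ * (V t * (V t)ᴴ) = V t * (V t)ᴴ := by
    rw [Matrix.mul_assoc, ← Matrix.mul_assoc ((V t)ᴴ), hVorth t, Matrix.one_mul]
  have hPP : P * P = P := by
    rw [hPdef]
    simp only [Matrix.sub_mul, Matrix.mul_sub, Matrix.one_mul, Matrix.mul_one, hUU]
    abel
  have hQQ : Q * Q = Q := by
    rw [hQdef]
    simp only [Matrix.sub_mul, Matrix.mul_sub, Matrix.one_mul, Matrix.mul_one, hVV]
    abel
  have hPU : P * U t = 0 := by
    rw [hPdef, Matrix.sub_mul, Matrix.one_mul, Matrix.mul_assoc, hUorth t, Matrix.mul_one,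
      sub_self]
  have hPEQ : P * E t * Q = 0 := by
    rw [hEfac t, ← Matrix.mul_assoc, ← Matrix.mul_assoc, hPU, Matrix.zero_mul,
      Matrix.zero_mul, Matrix.zero_mul]
  have hEE : (frobInner (E t) (E t)).re = 1 := by
    have h := frobNorm_sq (E t)
    rw [hEnorm t] at h
    simpa using h.symm
  -- D in key_orth form
  have hDform : D = St - P * St * Q - (α : ℂ) • E t := by
    rw [hDdef, hsmul, PE]
  -- derivative of f s = star (y s) ⬝ᵥ x s
  set c1 : ℂ := star (x t) ⬝ᵥ (G t *ᵥ (((ε : ℂ) • E' t) *ᵥ x t)) with hc1def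
  set c2 : ℂ := star (y t) ⬝ᵥ ((((ε : ℂ) • E' t) * G t) *ᵥ y t) with hc2def
  have hraw : HasDerivAt (fun s => star (y s) ⬝ᵥ x s)
      (star (y' t) ⬝ᵥ x t + star (y t) ⬝ᵥ x' t) t := by
    have h := HasDerivAt.fun_sum
      (fun i (_ : i ∈ (Finset.univ : Finset (Fin n))) => ((hydiff t i).star.mul (hxdiff t i)))
    simpa [dotProduct, Finset.sum_add_distrib] using h
  have hv1 : star (y t) ⬝ᵥ x' t = c1 * (star (y t) ⬝ᵥ x t) := by
    rw [hx' t, dotProduct_sub, dotProduct_smul, dotProduct_mulVec (star (y t)) (G t), hyG t,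
      zero_dotProduct, sub_zero, smul_eq_mul]
  have hv2 : star (y' t) ⬝ᵥ x t = c2 * (star (y t) ⬝ᵥ x t) := by
    rw [hy' t, sub_dotProduct, smul_dotProduct, smul_eq_mul, ← dotProduct_mulVec,
      ← Matrix.mulVec_mulVec (x t), hGx t, Matrix.mulVec_zero, dotProduct_zero, sub_zero]
  have hf : HasDerivAt (fun s => star (y s) ⬝ᵥ x s)
      ((c2 + c1) * (star (y t) ⬝ᵥ x t)) t := by
    rw [add_mul, ← hv1, ← hv2]
    exact hraw
  -- identify c2 + c1 with the Frobenius inner product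
  have hc : c2 + c1 = (ε : ℂ) * frobInner St (E' t) := by
    rw [hStdef, frobInner_Smat]
    rw [hc1def, hc2def, Matrix.mulVec_mulVec, Matrix.mul_smul, Matrix.smul_mul,
      smul_mulVec, smul_mulVec, dotProduct_smul, dotProduct_smul, smul_eq_mul,
      smul_eq_mul, mul_add]
    ring
  -- the ODE
  have hE' : E' t = -D := by
    rw [hODE t, hDdef, hStdef, hαdef]
    abel
  -- real part of c2 + c1
  have hkey : (frobInner St D).re = (frobInner D D).re := by
    rw [hDform]
    exact (key_orth P Q St (E t) hP hQ hPP hQQ hPEQ hEE α hαdef).symm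
  have hcre : (c2 + c1).re = -(ε * frobNorm D ^ 2) := by
    rw [hc, hE', frobInner_neg_right, frobNorm_sq, ← hkey]
    simp [Complex.mul_re]
  have h0 := hyx t
  have := hasDerivAt_cabs (fun s => star (y s) ⬝ᵥ x s) (c2 + c1) t hf h0
  rw [hcre] at this
  have hfin : -(ε * frobNorm D ^ 2) * ‖star (y t) ⬝ᵥ x t‖
      = -(ε * ‖star (y t) ⬝ᵥ x t‖) * frobNorm D ^ 2 := by ring
  rw [hfin] at this
  exact this
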